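/- Let p ∈ (0,1) and r₀ > 0, and suppose x_p minimizes ‖x‖_p^p over {x ∈ ℝ^n : |Φx| = b} and satisfies ‖x_p‖_∞ ≤ r₀. Then (x_p, |x_p|) minimizes (x,y) ↦ ∑_{i=1}^n (y_i)^p over T, and (x_p, |x_p|) is a pseudo-extreme point of T; more precisely, for every ε ∈ {−1,1}^m with (x_p, |x_p|) ∈ T_ε, the point (x_p, |x_p|) is an extreme point of T_ε. -/

import Mathlib

open Matrix

/-- The set of sign vectors `{−1,1}^m`. -/
def signs (m : ℕ) : Set (Fin m → ℝ) := {ε | ∀ j, ε j = 1 ∨ ε j = -1}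

/-- `T_ε = {(x,y) | Φx = b∘ε, |x| ≤ y, ‖x‖_∞ ≤ r₀, 0 ≤ y ≤ r₀·1}`. -/
def Teps {m n : ℕ} (Φ : Matrix (Fin m) (Fin n) ℝ) (b : Fin m → ℝ) (r₀ : ℝ)
    (ε : Fin m → ℝ) : Set ((Fin n → ℝ) × (Fin n → ℝ)) :=
  {q | Φ.mulVec q.1 = (fun j => b j * ε j) ∧ (∀ i, |q.1 i| ≤ q.2 i) ∧
    ‖q.1‖ ≤ r₀ ∧ ∀ i, 0 ≤ q.2 i ∧ q.2 i ≤ r₀}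

/-- `T = ⋃_{ε ∈ {−1,1}^m} T_ε`. -/
def TT {m n : ℕ} (Φ : Matrix (Fin m) (Fin n) ℝ) (b : Fin m → ℝ) (r₀ : ℝ) :
    Set ((Fin n → ℝ) × (Fin n → ℝ)) :=
  ⋃ ε ∈ signs m, Teps Φ b r₀ ε

/-- if `x_p` minimizes `‖x‖_p^p` over `{x | |Φx| = b}` (`0 < p < 1`)
and `‖x_p‖_∞ ≤ r₀`, then `(x_p, |x_p|)` minimizes `(x,y) ↦ ∑ (y_i)^p` over `T`, it
is a pseudo-extreme point of `T`, and more precisely it is an extreme point of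
every `T_ε` containing it. -/
theorem stmt_16 {m n : ℕ} (hmn : m ≤ n) (Φ : Matrix (Fin m) (Fin n) ℝ)
    (hrank : Φ.rank = m) (b : Fin m → ℝ) (hb : ∀ j, 0 ≤ b j)
    (r₀ : ℝ) (hr₀ : 0 < r₀)
    (p : ℝ) (hp : 0 < p) (hp1 : p < 1)
    (xp : Fin n → ℝ)
    (hxp_feas : ∀ j, |Φ.mulVec xp j| = b j)
    (hxp_min : ∀ y : Fin n → ℝ, (∀ j, |Φ.mulVec y j| = b j) →
      ∑ i, |xp i| ^ p ≤ ∑ i, |y i| ^ p)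
    (hxp_bd : ‖xp‖ ≤ r₀) :
    ((xp, fun i => |xp i|) ∈ TT Φ b r₀ ∧
      ∀ q ∈ TT Φ b r₀, ∑ i, |xp i| ^ p ≤ ∑ i, q.2 i ^ p) ∧
    (∃ ε ∈ signs m, (xp, fun i => |xp i|) ∈ Set.extremePoints ℝ (Teps Φ b r₀ ε)) ∧
    ∀ ε ∈ signs m, (xp, fun i => |xp i|) ∈ Teps Φ b r₀ ε →
      (xp, fun i => |xp i|) ∈ Set.extremePoints ℝ (Teps Φ b r₀ ε) := by
  classical
  have hbd : ∀ i, |xp i| ≤ r₀ := fun i =>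
    le_trans (by simpa [Real.norm_eq_abs] using norm_le_pi_norm xp i) hxp_bd
  set ε0 : Fin m → ℝ := fun j => if Φ.mulVec xp j = b j then 1 else -1 with hε0
  have hε0s : ε0 ∈ signs m := fun j => by
    by_cases h : Φ.mulVec xp j = b j <;> simp [ε0, h]
  have hmem0 : (xp, fun i => |xp i|) ∈ Teps Φ b r₀ ε0 := by
    refine ⟨?_, fun i => le_refl _, hxp_bd, fun i => ⟨abs_nonneg _, hbd i⟩⟩
    funext j
    by_cases h : Φ.mulVec xp j = b j
    · simp [ε0, h]
    · rcases (abs_eq (hb j)).mp (hxp_feas j) with h1 | h2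
      · exact absurd h1 h
      · show Φ.mulVec xp j = b j * ε0 j
        simp only [ε0, if_neg h, h2]
        ring
  -- feasibility transfer
  have hfeas : ∀ ε ∈ signs m, ∀ u : Fin n → ℝ, Φ.mulVec u = (fun j => b j * ε j) →
      ∀ j, |Φ.mulVec u j| = b j := by
    intro ε hε u hu j
    rw [hu]
    rcases hε j with h | h <;> simp [h, abs_of_nonneg (hb j)]
  -- the key extreme-point property
  have key : ∀ ε ∈ signs m, (xp, fun i => |xp i|) ∈ Teps Φ b r₀ ε →
      (xp, fun i => |xp i|) ∈ Set.extremePoints ℝ (Teps Φ b r₀ ε) := by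
    intro ε hε hmem
    refine ⟨hmem, ?_⟩
    rintro ⟨u, v⟩ hu ⟨u', v'⟩ hu' hseg
    obtain ⟨a, c, ha, hc, hac, heq⟩ := hseg
    have hx : ∀ i, a * u i + c * u' i = xp i := fun i => congrFun (congrArg Prod.fst heq) i
    have hy : ∀ i, a * v i + c * v' i = |xp i| := fun i => congrFun (congrArg Prod.snd heq) i
    have hvnn : ∀ i, (0:ℝ) ≤ v i := fun i => (hu.2.2.2 i).1
    have hv'nn : ∀ i, (0:ℝ) ≤ v' i := fun i => (hu'.2.2.2 i).1
    set S := ∑ i, |xp i| ^ p with hS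
    have hA : S ≤ ∑ i, v i ^ p := by
      refine le_trans (hxp_min u (hfeas ε hε u hu.1)) ?_
      exact Finset.sum_le_sum fun i _ =>
        Real.rpow_le_rpow (abs_nonneg _) (hu.2.1 i) hp.le
    have hB : S ≤ ∑ i, v' i ^ p := by
      refine le_trans (hxp_min u' (hfeas ε hε u' hu'.1)) ?_
      exact Finset.sum_le_sum fun i _ =>
        Real.rpow_le_rpow (abs_nonneg _) (hu'.2.1 i) hp.le
    -- pointwise concavity inequality
    have hconc : ∀ i, a * (v i) ^ p + c * (v' i) ^ p ≤ |xp i| ^ p := by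
      intro i
      have := (Real.concaveOn_rpow hp.le hp1.le).2 (Set.mem_Ici.2 (hvnn i))
        (Set.mem_Ici.2 (hv'nn i)) ha.le hc.le hac
      simpa [smul_eq_mul, hy i] using this
    have hsum : ∑ i, |xp i| ^ p ≤ ∑ i, (a * (v i) ^ p + c * (v' i) ^ p) := by
      have : ∑ i, (a * (v i) ^ p + c * (v' i) ^ p)
          = a * (∑ i, v i ^ p) + c * (∑ i, v' i ^ p) := by
        rw [Finset.sum_add_distrib, Finset.mul_sum, Finset.mul_sum]
      rw [this]
      calc S = a * S + c * S := by linear_combination (-S) * hac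
        _ ≤ a * (∑ i, v i ^ p) + c * (∑ i, v' i ^ p) := by
            gcongr
    -- per-coordinate equality
    have heqi : ∀ i, a * (v i) ^ p + c * (v' i) ^ p = |xp i| ^ p := by
      intro i
      by_contra hne
      have hlt : a * (v i) ^ p + c * (v' i) ^ p < |xp i| ^ p :=
        lt_of_le_of_ne (hconc i) hne
      have : ∑ j, (a * (v j) ^ p + c * (v' j) ^ p) < ∑ j, |xp j| ^ p :=
        Finset.sum_lt_sum (fun j _ => hconc j) ⟨i, Finset.mem_univ i, hlt⟩
      exact absurd hsum (not_le.2 this)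
    -- strict concavity forces v = v'
    have hvv : ∀ i, v i = v' i := by
      intro i
      by_contra hne
      have := (Real.strictConcaveOn_rpow hp hp1).2 (Set.mem_Ici.2 (hvnn i))
        (Set.mem_Ici.2 (hv'nn i)) hne ha hc hac
      rw [smul_eq_mul, smul_eq_mul, smul_eq_mul, smul_eq_mul, hy i] at this
      exact absurd (heqi i) (ne_of_lt this)
    have hvxp : ∀ i, v i = |xp i| := by
      intro i
      have := hy i
      rw [← hvv i] at this
      linear_combination this - v i * hac
    have hv'xp : ∀ i, v' i = |xp i| := fun i => (hvv i).symm.trans (hvxp i)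
    -- now the u-part
    have huabs : ∀ i, |u i| = |xp i| ∧ |u' i| = |xp i| := by
      intro i
      have h1 : |u i| ≤ |xp i| := (hu.2.1 i).trans_eq (hvxp i)
      have h2 : |u' i| ≤ |xp i| := (hu'.2.1 i).trans_eq (hv'xp i)
      have h3 : |xp i| ≤ a * |u i| + c * |u' i| := by
        calc |xp i| = |a * u i + c * u' i| := by rw [hx i]
          _ ≤ |a * u i| + |c * u' i| := abs_add_le _ _
          _ = a * |u i| + c * |u' i| := by
              rw [abs_mul, abs_mul, abs_of_pos ha, abs_of_pos hc]
      have habc : a * |xp i| + c * |xp i| = |xp i| := by linear_combination |xp i| * hac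
      have e : a * |u i| + c * |u' i| = |xp i| := by
        refine le_antisymm ?_ h3
        calc a * |u i| + c * |u' i| ≤ a * |xp i| + c * |xp i| :=
              add_le_add (mul_le_mul_of_nonneg_left h1 ha.le)
                (mul_le_mul_of_nonneg_left h2 hc.le)
          _ = |xp i| := habc
      constructor
      · by_contra hne
        have hlt : |u i| < |xp i| := lt_of_le_of_ne h1 hne
        have := mul_lt_mul_of_pos_left hlt ha
        have := mul_le_mul_of_nonneg_left h2 hc.le
        linarith
      · by_contra hne
        have hlt : |u' i| < |xp i| := lt_of_le_of_ne h2 hne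
        have := mul_lt_mul_of_pos_left hlt hc
        have := mul_le_mul_of_nonneg_left h1 ha.le
        linarith
    have hueq : ∀ i, u i = xp i := by
      intro i
      obtain ⟨h1, h2⟩ := huabs i
      rcases abs_eq_abs.mp h1 with h | h
      · exact h
      · -- u i = - xp i
        have hx' := hx i
        rw [h] at hx'
        have : c * u' i = (1 + a) * xp i := by linarith
        have habs : c * |u' i| = (1 + a) * |xp i| := by
          have := congrArg abs this
          rwa [abs_mul, abs_mul, abs_of_pos hc, abs_of_pos (by linarith : (0:ℝ) < 1 + a)] at this
        rw [h2] at habs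
        have hxp0 : |xp i| = 0 := by nlinarith [abs_nonneg (xp i)]
        have : xp i = 0 := abs_eq_zero.mp hxp0
        rw [h, this, neg_zero]
    have hu'eq : ∀ i, u' i = xp i := by
      intro i
      obtain ⟨h1, h2⟩ := huabs i
      rcases abs_eq_abs.mp h2 with h | h
      · exact h
      · have hx' := hx i
        rw [h] at hx'
        have : a * u i = (1 + c) * xp i := by linarith
        have habs : a * |u i| = (1 + c) * |xp i| := by
          have := congrArg abs this
          rwa [abs_mul, abs_mul, abs_of_pos ha, abs_of_pos (by linarith : (0:ℝ) < 1 + c)] at this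
        rw [h1] at habs
        have hxp0 : |xp i| = 0 := by nlinarith [abs_nonneg (xp i)]
        have : xp i = 0 := abs_eq_zero.mp hxp0
        rw [h, this, neg_zero]
    exact Prod.ext (funext hueq) (funext hvxp)
  refine ⟨⟨?_, ?_⟩, ⟨ε0, hε0s, key ε0 hε0s hmem0⟩, key⟩
  · exact Set.mem_biUnion hε0s hmem0
  · rintro q hq
    obtain ⟨ε, hε, hqε⟩ := Set.mem_iUnion₂.mp hq
    calc ∑ i, |xp i| ^ p ≤ ∑ i, |q.1 i| ^ p := hxp_min q.1 (hfeas ε hε q.1 hqε.1)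
      _ ≤ ∑ i, q.2 i ^ p := Finset.sum_le_sum fun i _ =>
          Real.rpow_le_rpow (abs_nonneg _) (hqε.2.1 i) hp.le
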